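/- Let f(x) = ‖x‖₁ + (μ/2)‖Ax − c‖₂² with AA' = I, μ > 0, c ∈ ℝⁿ. Then x* minimizes f if and only if x* = S_{1/μ}(x* + A'(c − Ax*)). -/

import Mathlib

open Matrix

noncomputable def softThresh (l w : ℝ) : ℝ := Real.sign w * max (|w| - l) 0

noncomputable def softThreshV {ι : Type*} (l : ℝ) (w : ι → ℝ) : ι → ℝ :=
  fun i => softThresh l (w i)

noncomputable def l1norm {ι : Type*} [Fintype ι] (x : ι → ℝ) : ℝ := ∑ i, |x i|

noncomputable def l2norm {ι : Type*} [Fintype ι] (x : ι → ℝ) : ℝ :=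
  Real.sqrt (∑ i, (x i)^2)

noncomputable def ip {ι : Type*} [Fintype ι] (u v : ι → ℝ) : ℝ := ∑ i, u i * v i

lemma l2sq {ι : Type*} [Fintype ι] (v : ι → ℝ) : (l2norm v)^2 = ∑ i, (v i)^2 :=
  Real.sq_sqrt (Finset.sum_nonneg fun _ _ => sq_nonneg _)

/-- In the positive case, 1-D minimality forces `β = -μ⁻¹`. -/
lemma oneDim_min_pos (μ : ℝ) (hμ : 0 < μ) (x β C : ℝ) (hC : 0 ≤ C) (hx : 0 < x)
    (h : ∀ t : ℝ, 0 ≤ |x + t| - |x| + μ * β * t + C * t ^ 2) : β = -μ⁻¹ := by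
  by_contra hβ
  have hδ0 : 1 + μ * β ≠ 0 := by
    intro h0
    apply hβ
    have : μ * β = -1 := by linarith
    field_simp
    linarith
  set δ := 1 + μ * β with hδ
  have habsx : |x| = x := abs_of_pos hx
  rcases hδ0.lt_or_gt with hneg | hpos
  · set ε := min x ((-δ) / (2 * (C + 1))) with hε
    have hεpos : 0 < ε := lt_min hx (div_pos (by linarith) (by positivity))
    have hεδ : ε ≤ (-δ) / (2 * (C + 1)) := min_le_right _ _
    have hεδ' : 2 * (C + 1) * ε ≤ -δ := by
      rw [le_div_iff₀ (by positivity)] at hεδ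
      linarith [mul_comm ε (2 * (C + 1)), hεδ]
    have h2 := h ε
    rw [abs_of_pos (by linarith : (0:ℝ) < x + ε), habsx] at h2
    nlinarith [mul_pos hεpos hεpos, sq_nonneg ε]
  · set ε := min x (δ / (2 * (C + 1))) with hε
    have hεpos : 0 < ε := lt_min hx (by positivity)
    have hεx : ε ≤ x := min_le_left _ _
    have hεδ : ε ≤ δ / (2 * (C + 1)) := min_le_right _ _
    have hεδ' : 2 * (C + 1) * ε ≤ δ := by
      rw [le_div_iff₀ (by positivity)] at hεδ
      linarith [mul_comm ε (2 * (C + 1)), hεδ]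
    have h2 := h (-ε)
    rw [show x + -ε = x - ε by ring, abs_of_nonneg (by linarith : (0:ℝ) ≤ x - ε),
      habsx] at h2
    nlinarith [mul_pos hεpos hεpos, sq_nonneg ε]

/-- In the zero case, 1-D minimality forces `|μ β| ≤ 1`. -/
lemma oneDim_min_zero (μ : ℝ) (hμ : 0 < μ) (β C : ℝ) (hC : 0 ≤ C)
    (h : ∀ t : ℝ, 0 ≤ |t| + μ * β * t + C * t ^ 2) : |μ * β| ≤ 1 := by
  by_contra hs
  push_neg at hs
  set s := μ * β with hsdef
  rcases lt_abs.mp hs with h1 | h1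
  · set ε := (s - 1) / (2 * (C + 1)) with hε
    have hεpos : 0 < ε := div_pos (by linarith) (by positivity)
    have hεδ' : 2 * (C + 1) * ε = s - 1 := by
      rw [hε]; field_simp
    have h2 := h (-ε)
    rw [abs_neg, abs_of_pos hεpos] at h2
    nlinarith [mul_pos hεpos hεpos]
  · set ε := (-s - 1) / (2 * (C + 1)) with hε
    have hεpos : 0 < ε := div_pos (by linarith) (by positivity)
    have hεδ' : 2 * (C + 1) * ε = -s - 1 := by
      rw [hε]; field_simp
    have h2 := h ε
    rw [abs_of_pos hεpos] at h2
    nlinarith [mul_pos hεpos hεpos]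

/-- 1-D minimality implies the soft-thresholding fixed point. -/
lemma oneDim_min (μ : ℝ) (hμ : 0 < μ) (x β C : ℝ) (hC : 0 ≤ C)
    (h : ∀ t : ℝ, 0 ≤ |x + t| - |x| + μ * β * t + C * t ^ 2) :
    x = softThresh μ⁻¹ (x - β) := by
  have hμ' : 0 < μ⁻¹ := inv_pos.mpr hμ
  rcases lt_trichotomy x 0 with hx | hx | hx
  · have h' : ∀ t : ℝ, 0 ≤ |(-x) + t| - |(-x)| + μ * (-β) * t + C * t ^ 2 := by
      intro t
      have h2 := h (-t)
      have e1 : |x + -t| = |(-x) + t| := by rw [show x + -t = -((-x) + t) by ring, abs_neg]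
      have e2 : |x| = |(-x)| := (abs_neg x).symm
      have e3 : μ * β * (-t) = μ * (-β) * t := by ring
      have e4 : (-t) ^ 2 = t ^ 2 := by ring
      rw [e1, e2, e3, e4] at h2
      exact h2
    have hβ := oneDim_min_pos μ hμ (-x) (-β) C hC (by linarith) h'
    have hβ' : β = μ⁻¹ := by linarith
    have hw : x - β < 0 := by rw [hβ']; linarith
    rw [softThresh, Real.sign_of_neg hw, abs_of_neg hw, hβ']
    rw [show -(x - μ⁻¹) - μ⁻¹ = -x by ring, max_eq_left (by linarith)]
    ring
  · subst hx
    have h' : ∀ t : ℝ, 0 ≤ |t| + μ * β * t + C * t ^ 2 := by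
      intro t; have h2 := h t; simpa using h2
    have hs := oneDim_min_zero μ hμ β C hC h'
    have hβ : |β| ≤ μ⁻¹ := by
      rw [abs_mul, abs_of_pos hμ] at hs
      rw [show μ⁻¹ = 1 / μ from (one_div μ).symm, le_div_iff₀ hμ]
      linarith [mul_comm |β| μ, hs]
    rw [softThresh, show (0:ℝ) - β = -β by ring, abs_neg,
      max_eq_right (by linarith), mul_zero]
  · have hβ := oneDim_min_pos μ hμ x β C hC hx h
    have hw : 0 < x - β := by rw [hβ]; linarith
    rw [softThresh, Real.sign_of_pos hw, abs_of_pos hw, hβ]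
    rw [show x - -μ⁻¹ - μ⁻¹ = x by ring, max_eq_left hx.le]
    ring

/-- The fixed point gives the 1-D subgradient inequality. -/
lemma oneDim_sub (μ : ℝ) (hμ : 0 < μ) (x β : ℝ)
    (h : x = softThresh μ⁻¹ (x - β)) (z : ℝ) :
    0 ≤ |z| - |x| + μ * β * (z - x) := by
  have hμ' : 0 < μ⁻¹ := inv_pos.mpr hμ
  set w := x - β with hw
  by_cases h1 : |w| ≤ μ⁻¹
  · have hx0 : x = 0 := by
      rw [h, softThresh, max_eq_right (by linarith), mul_zero]
    have hβw : β = -w := by rw [hw]; linarith [hx0]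
    have hβ : |β| ≤ μ⁻¹ := by rw [hβw, abs_neg]; exact h1
    have key : |μ * β * z| ≤ |z| := by
      rw [abs_mul, abs_mul, abs_of_pos hμ]
      calc μ * |β| * |z| ≤ μ * μ⁻¹ * |z| := by
            apply mul_le_mul_of_nonneg_right _ (abs_nonneg z)
            exact mul_le_mul_of_nonneg_left hβ hμ.le
        _ = |z| := by rw [mul_inv_cancel₀ hμ.ne', one_mul]
    have := neg_abs_le (μ * β * z)
    rw [hx0]
    simp only [abs_zero, sub_zero]
    nlinarith [abs_nonneg z]
  · push_neg at h1
    rcases lt_trichotomy w 0 with hwneg | hw0 | hwpos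
    · have habs : |w| = -w := abs_of_neg hwneg
      have hx : x = w + μ⁻¹ := by
        rw [h, softThresh, Real.sign_of_neg hwneg, habs,
          max_eq_left (by rw [habs] at h1; linarith)]
        ring
      have hxneg : x ≤ 0 := by
        rw [habs] at h1; rw [hx]; linarith
      have hβ : μ * β = 1 := by
        have : β = μ⁻¹ := by rw [hw] at hx; linarith
        rw [this, mul_inv_cancel₀ hμ.ne']
      rw [hβ, abs_of_nonpos hxneg]
      linarith [neg_abs_le z]
    · exfalso; rw [hw0] at h1; simp at h1; linarith
    · have habs : |w| = w := abs_of_pos hwpos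
      have hx : x = w - μ⁻¹ := by
        rw [h, softThresh, Real.sign_of_pos hwpos, habs,
          max_eq_left (by rw [habs] at h1; linarith)]
        ring
      have hxpos : 0 ≤ x := by rw [habs] at h1; rw [hx]; linarith
      have hβ : μ * β = -1 := by
        have : β = -μ⁻¹ := by rw [hw] at hx; linarith
        rw [this]; field_simp
      rw [hβ, abs_of_nonneg hxpos]
      linarith [le_abs_self z]

/-- Quadratic expansion of the least-squares term. -/
lemma quad_expand {n N : ℕ} (A : Matrix (Fin n) (Fin N) ℝ) (c : Fin n → ℝ)
    (xs x : Fin N → ℝ) :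
    ∑ i, ((A.mulVec x - c) i)^2
      = ∑ i, ((A.mulVec xs - c) i)^2
        + 2 * ∑ j, (Aᵀ.mulVec (A.mulVec xs - c)) j * (x j - xs j)
        + ∑ i, ((A.mulVec (x - xs)) i)^2 := by
  have hcross : ∑ j, (Aᵀ.mulVec (A.mulVec xs - c)) j * (x j - xs j)
      = ∑ i, (A.mulVec xs - c) i * (A.mulVec (x - xs)) i := by
    have h1 : (A.mulVec xs - c) ⬝ᵥ (A.mulVec (x - xs))
        = (Aᵀ.mulVec (A.mulVec xs - c)) ⬝ᵥ (x - xs) := by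
      rw [Matrix.dotProduct_mulVec, Matrix.mulVec_transpose]
    simp only [dotProduct, Pi.sub_apply] at h1 ⊢
    rw [← h1]
  rw [hcross]
  have hpt : ∀ i, (A.mulVec x - c) i = (A.mulVec xs - c) i + (A.mulVec (x - xs)) i := by
    intro i
    rw [Matrix.mulVec_sub]
    simp only [Pi.sub_apply, Pi.add_apply]
    ring
  calc ∑ i, ((A.mulVec x - c) i)^2
      = ∑ i, (((A.mulVec xs - c) i)^2 + 2 * ((A.mulVec xs - c) i * (A.mulVec (x - xs)) i)
          + ((A.mulVec (x - xs)) i)^2) :=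
        Finset.sum_congr rfl fun i _ => by rw [hpt i]; ring
    _ = _ := by
        rw [Finset.sum_add_distrib, Finset.sum_add_distrib, ← Finset.mul_sum]

/-- For `f(x) = ‖x‖₁ + (μ/2)‖Ax - c‖₂²` with `AAᵀ = I`, `x*` minimizes `f` iff
`x* = S_{1/μ}(x* + Aᵀ(c - Ax*))`. -/
theorem minimizer_iff_fixed_point {n N : ℕ} (A : Matrix (Fin n) (Fin N) ℝ)
    (hA : A * Aᵀ = 1) (c : Fin n → ℝ) (μ : ℝ) (hμ : 0 < μ) (xs : Fin N → ℝ) :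
    (∀ x : Fin N → ℝ,
        l1norm xs + (μ/2) * (l2norm (A.mulVec xs - c))^2
          ≤ l1norm x + (μ/2) * (l2norm (A.mulVec x - c))^2) ↔
      xs = softThreshV μ⁻¹ (xs + Aᵀ.mulVec (c - A.mulVec xs)) := by
  set b : Fin N → ℝ := Aᵀ.mulVec (A.mulVec xs - c) with hb
  have hbneg : Aᵀ.mulVec (c - A.mulVec xs) = -b := by
    rw [hb, show c - A.mulVec xs = -(A.mulVec xs - c) by ring, Matrix.mulVec_neg]
  constructor
  · intro h
    funext i
    have key : ∀ t : ℝ,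
        0 ≤ |xs i + t| - |xs i| + μ * b i * t + (μ / 2 * ∑ k, (A k i)^2) * t ^ 2 := by
      intro t
      have h2 := h (xs + Pi.single i t)
      rw [l2sq, l2sq] at h2
      have hl1 : l1norm (xs + Pi.single i t) - l1norm xs = |xs i + t| - |xs i| := by
        rw [l1norm, l1norm, ← Finset.sum_sub_distrib]
        rw [Finset.sum_eq_single i]
        · simp
        · intro j _ hj
          simp [Pi.single_eq_of_ne hj]
        · simp
      have hq : ∑ k, ((A.mulVec (xs + Pi.single i t) - c) k)^2
          = ∑ k, ((A.mulVec xs - c) k)^2 + 2 * (b i * t) + (∑ k, (A k i)^2) * t ^ 2 := by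
        have hmv : ∀ k, (A.mulVec (xs + Pi.single i t) - c) k
            = (A.mulVec xs - c) k + A k i * t := by
          intro k
          rw [Matrix.mulVec_add, Matrix.mulVec_single]
          simp only [Pi.sub_apply, Pi.add_apply, Pi.smul_apply, op_smul_eq_mul, Matrix.col_apply]
          ring
        have hbi : b i = ∑ k, A k i * (A.mulVec xs - c) k := by
          rw [hb, Matrix.mulVec]
          simp [dotProduct, Matrix.transpose_apply]
        calc ∑ k, ((A.mulVec (xs + Pi.single i t) - c) k)^2
            = ∑ k, (((A.mulVec xs - c) k)^2 + 2 * (A k i * (A.mulVec xs - c) k * t)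
                + (A k i)^2 * t ^ 2) :=
              Finset.sum_congr rfl fun k _ => by rw [hmv k]; ring
          _ = ∑ k, ((A.mulVec xs - c) k)^2 + 2 * (b i * t) + (∑ k, (A k i)^2) * t ^ 2 := by
              rw [Finset.sum_add_distrib, Finset.sum_add_distrib, ← Finset.mul_sum,
                Finset.sum_mul, hbi, Finset.sum_mul]
        ;
      rw [hq] at h2
      nlinarith [h2, hl1]
    have hfix := oneDim_min μ hμ (xs i) (b i) (μ / 2 * ∑ k, (A k i)^2)
      (by positivity) key
    rw [softThreshV, Pi.add_apply, hbneg, Pi.neg_apply]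
    rw [show xs i + -b i = xs i - b i from by ring]
    exact hfix
  · intro h x
    have hsub : ∀ i, 0 ≤ |x i| - |xs i| + μ * b i * (x i - xs i) := by
      intro i
      apply oneDim_sub μ hμ (xs i) (b i)
      · have := congrFun h i
        rw [softThreshV, Pi.add_apply, hbneg, Pi.neg_apply] at this
        rw [show xs i - b i = xs i + -b i from by ring]
        exact this
      ;
    have hsum : 0 ≤ ∑ i, (|x i| - |xs i| + μ * b i * (x i - xs i)) :=
      Finset.sum_nonneg fun i _ => hsub i
    have hsplit : ∑ i, (|x i| - |xs i| + μ * b i * (x i - xs i))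
        = (l1norm x - l1norm xs) + μ * ∑ j, b j * (x j - xs j) := by
      rw [l1norm, l1norm, Finset.sum_add_distrib, Finset.sum_sub_distrib, Finset.mul_sum]
      congr 1
      exact Finset.sum_congr rfl fun i _ => by ring
    have hq := quad_expand A c xs x
    have hD : 0 ≤ ∑ i, ((A.mulVec (x - xs)) i)^2 :=
      Finset.sum_nonneg fun i _ => sq_nonneg _
    rw [l2sq, l2sq]
    rw [hsplit] at hsum
    rw [← hb] at hq
    nlinarith [hsum, hq, hD]
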